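/- The consistent sets of the dependence space (U, Θ_M) induced by a matroid M are exactly the independent sets of M: IND_{Θ_M} = I(M). -/

import Mathlib

open Set

theorem consistent_iff_indep {α : Type*} (M : Matroid α) [M.Finite]
    (X : Set α) (hX : X ⊆ M.E) :
    (∀ Y, Y ⊆ M.E → M.closure Y = M.closure X → Y ⊆ X → Y = X) ↔ M.Indep X := by
  constructor
  · intro h
    obtain ⟨I, hI⟩ := M.exists_isBasis X hX
    have := h I (hI.indep.subset_ground) hI.closure_eq_closure hI.subset
    exact this ▸ hI.indep
  · intro hI Y hYE hcl hYX
    by_contra hne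
    obtain ⟨e, heX, heY⟩ := exists_of_ssubset ⟨hYX, fun h ↦ hne (hYX.antisymm h)⟩
    have h1 : e ∈ M.closure Y := by
      rw [hcl]; exact M.mem_closure_of_mem heX
    have h2 : Y ⊆ X \ {e} := fun y hy ↦ ⟨hYX hy, fun he ↦ heY (he ▸ hy)⟩
    exact hI.notMem_closure_sdiff_of_mem heX (M.closure_subset_closure h2 h1)
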